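/- Along the interval consensus dynamics with nonempty interval intersection, the function h(x(t)) = min{min_i x_i(t), p_*} is nondecreasing in t, where p_* = max_i p_i. -/

import Mathlib

open Finset Filter
open Topology

/-- Saturation of `z` onto the interval `[p, q]`. -/
noncomputable def sat (p q z : ℝ) : ℝ := max p (min z q)

/-- With nonempty interval intersection, the function
`h(x(t)) = min{min_i x_i(t), p_*}` is nondecreasing along the interval
consensus dynamics, where `p_* = max_i p_i`. -/
theorem h_nondecreasing
    (n : ℕ) (a : Fin (n + 1) → Fin (n + 1) → ℝ) (ha : ∀ i j, 0 ≤ a i j)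
    (p q : Fin (n + 1) → ℝ) (hpq : ∀ m, p m ≤ q m)
    (hinter : Finset.univ.sup' Finset.univ_nonempty p ≤
      Finset.univ.inf' Finset.univ_nonempty q)
    (x : ℝ → Fin (n + 1) → ℝ)
    (hx : ∀ i t, HasDerivAt (fun s => x s i)
      (∑ j, a i j * (sat (p j) (q j) (x t j) - x t i)) t) :
    ∀ s t : ℝ, 0 ≤ s → s ≤ t →
      min (Finset.univ.inf' Finset.univ_nonempty (x s))
          (Finset.univ.sup' Finset.univ_nonempty p) ≤
      min (Finset.univ.inf' Finset.univ_nonempty (x t))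
          (Finset.univ.sup' Finset.univ_nonempty p) := by
  classical
  intro s t _hs0 hst
  set P : ℝ := Finset.univ.sup' Finset.univ_nonempty p with hPdef
  have hqP : ∀ j, P ≤ q j := fun j =>
    hinter.trans (Finset.inf'_le _ (Finset.mem_univ j))
  have hsat : ∀ j z, min z P ≤ sat (p j) (q j) z := by
    intro j z
    unfold sat
    rcases le_total z (q j) with h | h
    · calc min z P ≤ z := min_le_left _ _
        _ = min z (q j) := (min_eq_left h).symm
        _ ≤ max (p j) (min z (q j)) := le_max_right _ _
    · calc min z P ≤ P := min_le_right _ _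
        _ ≤ q j := hqP j
        _ = min z (q j) := (min_eq_right h).symm
        _ ≤ max (p j) (min z (q j)) := le_max_right _ _
  set c : ℝ := min (Finset.univ.inf' Finset.univ_nonempty (x s)) P with hcdef
  have hcP : c ≤ P := min_le_right _ _
  have hcx : ∀ i, c ≤ x s i := fun i =>
    le_trans (min_le_left _ _) (Finset.inf'_le _ (Finset.mem_univ i))
  -- derivative abbreviation
  set d : Fin (n + 1) → ℝ → ℝ :=
    fun i z => ∑ j, a i j * (sat (p j) (q j) (x z j) - x z i) with hddef
  have hx' : ∀ i z, HasDerivAt (fun s => x s i) (d i z) z := fun i z => hx i z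
  -- the function f = max_i (-x_i)
  set f : ℝ → ℝ :=
    fun z => Finset.univ.sup' Finset.univ_nonempty (fun i => -(x z i)) with hfdef
  have hfcontAt : ∀ z, ContinuousAt f z := by
    intro z
    exact ContinuousAt.finset_sup'_apply Finset.univ_nonempty
      (fun i _ => ((hx' i z).continuousAt).neg)
  -- active set and upper Dini bound f'
  set A : ℝ → Finset (Fin (n + 1)) :=
    fun z => Finset.univ.filter (fun i => f z = -(x z i)) with hAdef
  have hAne : ∀ z, (A z).Nonempty := by
    intro z
    obtain ⟨i, _, hi⟩ := Finset.exists_mem_eq_sup' Finset.univ_nonempty (fun i => -(x z i))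
    exact ⟨i, Finset.mem_filter.2 ⟨Finset.mem_univ i, hi⟩⟩
  set f' : ℝ → ℝ := fun z => (A z).sup' (hAne z) (fun i => -(d i z)) with hf'def
  have key : ∀ ε : ℝ, 0 < ε → ∀ i, c - ε * (1 + (t - s)) ≤ x t i := by
    intro ε hε i
    set B : ℝ → ℝ := fun z => -c + ε * (1 + (z - s)) with hBdef
    have hB' : ∀ z, HasDerivAt B ε z := by
      intro z
      have h1 : HasDerivAt (fun z : ℝ => 1 + (z - s)) 1 z := by
        simpa using ((hasDerivAt_id z).sub_const s).const_add 1
      have h2 := (h1.const_mul ε).const_add (-c)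
      rw [hBdef]
      simpa using h2
    have hf_cont : ContinuousOn f (Set.Icc s t) := fun z _ =>
      (hfcontAt z).continuousWithinAt
    have ha_init : f s ≤ B s := by
      have h1 : f s ≤ -c := by
        rw [hfdef]
        rw [Finset.sup'_le_iff]
        intro j _
        have := hcx j
        linarith
      have h2 : B s = -c + ε := by simp [hBdef]
      linarith
    have hf'bound : ∀ z ∈ Set.Ico s t, ∀ r, f' z < r →
        ∃ᶠ w in 𝓝[>] z, slope f z w < r := by
      intro z hz r hr
      -- find an index achieving the max frequently near z
      have hex : ∃ i : Fin (n + 1), ∃ᶠ w in 𝓝[>] z, f w = -(x w i) := by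
        by_contra hcon
        push_neg at hcon
        have hev : ∀ᶠ w in 𝓝[>] z, ∀ j : Fin (n + 1), f w ≠ -(x w j) := by
          rw [Filter.eventually_all]
          intro j
          have := hcon j
          exact this
        obtain ⟨w, hw⟩ := hev.exists
        obtain ⟨j, _, hj⟩ := Finset.exists_mem_eq_sup' Finset.univ_nonempty
          (fun i => -(x w i))
        exact hw j hj
      obtain ⟨k, hkfreq⟩ := hex
      have hfz : Tendsto f (𝓝[>] z) (𝓝 (f z)) :=
        (hfcontAt z).continuousWithinAt.tendsto
      have hxk : Tendsto (fun w => -(x w k)) (𝓝[>] z) (𝓝 (-(x z k))) :=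
        (((hx' k z).continuousAt).neg).continuousWithinAt.tendsto
      have hact : f z = -(x z k) :=
        tendsto_nhds_unique_of_frequently_eq hfz hxk hkfreq
      have hkA : k ∈ A z := Finset.mem_filter.2 ⟨Finset.mem_univ k, hact⟩
      have hdk : -(d k z) ≤ f' z := by
        simp only [hf'def]
        exact Finset.le_sup' (fun i => -(d i z)) hkA
      have hslope : Tendsto (slope (fun w => -(x w k)) z) (𝓝[>] z) (𝓝 (-(d k z))) := by
        have h1 := hasDerivAt_iff_tendsto_slope.1 ((hx' k z).neg)
        exact h1.mono_left (nhdsWithin_mono z (fun w hw => ne_of_gt hw))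
      have hev2 : ∀ᶠ w in 𝓝[>] z, slope (fun w => -(x w k)) z w < r :=
        hslope.eventually_lt_const (lt_of_le_of_lt hdk hr)
      refine (hkfreq.and_eventually hev2).mono ?_
      rintro w ⟨hw1, hw2⟩
      have heq : slope f z w = slope (fun w => -(x w k)) z w := by
        rw [slope_def_field, slope_def_field, hw1, hact]
      rw [heq]
      exact hw2
    have hbound : ∀ z ∈ Set.Ico s t, f z = B z → f' z < ε := by
      intro z hz hfB
      rw [hf'def, Finset.sup'_lt_iff]
      intro j hj
      have hjact : f z = -(x z j) := (Finset.mem_filter.1 hj).2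
      have hxz : x z j = c - ε * (1 + (z - s)) := by
        have h1 := hjact.symm.trans hfB
        simp only [hBdef] at h1
        linarith
      have hzs : s ≤ z := hz.1
      have hpos : (0:ℝ) < ε * (1 + (z - s)) := by nlinarith
      have hxlt : x z j < P := by
        calc x z j = c - ε * (1 + (z - s)) := hxz
          _ < c := by linarith
          _ ≤ P := hcP
      have hxmin : ∀ l, x z j ≤ x z l := by
        intro l
        have h1 : -(x z l) ≤ f z := by
          simp only [hfdef]
          exact Finset.le_sup' (fun i => -(x z i)) (Finset.mem_univ l)
        rw [hjact] at h1
        linarith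
      have hd : 0 ≤ d j z := by
        rw [hddef]
        apply Finset.sum_nonneg
        intro l _
        apply mul_nonneg (ha j l)
        have h1 : min (x z l) P ≤ sat (p l) (q l) (x z l) := hsat l (x z l)
        have h2 : x z j ≤ min (x z l) P := le_min (hxmin l) hxlt.le
        linarith
      linarith
    have main := image_le_of_liminf_slope_right_lt_deriv_boundary
      hf_cont hf'bound ha_init hB' hbound (Set.right_mem_Icc.2 hst)
    have h1 : -(x t i) ≤ f t := by
      simp only [hfdef]
      exact Finset.le_sup' (fun j => -(x t j)) (Finset.mem_univ i)
    rw [hBdef] at main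
    simp only at main
    linarith
  refine le_min ?_ hcP
  rw [Finset.le_inf'_iff]
  intro i _
  by_contra hcon
  push_neg at hcon
  have hT : (0:ℝ) < 1 + (t - s) := by linarith
  have hεpos : 0 < (c - x t i) / (2 * (1 + (t - s))) := by
    apply div_pos (by linarith) (by linarith)
  have := key _ hεpos i
  rw [div_mul_eq_mul_div, mul_comm] at this
  have h2 : (1 + (t - s)) * ((c - x t i) / (2 * (1 + (t - s)))) = (c - x t i) / 2 := by
    field_simp
  have h3 : c - (c - x t i) / 2 ≤ x t i := by
    calc c - (c - x t i) / 2
        = c - (1 + (t - s)) * ((c - x t i) / (2 * (1 + (t - s)))) := by rw [h2]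
      _ ≤ x t i := by
          have := key ((c - x t i) / (2 * (1 + (t - s)))) hεpos i
          linarith
  linarith
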